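/- arXiv:2310.17047 — 2 statements merged into one kernel-verified Lean document; each statement's English description precedes it below -/
import Mathlib

section
/- Let q be a prime power and ω a character of F_q^*. The number of characters ν of F_{q^2}^* with ν ≠ ν^q (ν primitive) and ν restricted to F_q^* equal to ω is: q − 1 if q is odd and ω^{(q−1)/2} is trivial; q + 1 if q is odd and ω^{(q−1)/2} is nontrivial; and q if q is even. -/
open Classical

open Finset in
lemma countZMod (q n t c : ℕ) (hq : 2 ≤ q) (hn : n = (q + 1) * (q - 1))
    (ht : Nat.Coprime t (q - 1)) (hc : c < q - 1) :
    Nat.card {a : ZMod n // ¬((q : ZMod n) * a = a) ∧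
        a * (((q + 1) * t : ℕ) : ZMod n) = (((q + 1) * c : ℕ) : ZMod n)} =
      if Even q then q else if Even c then q - 1 else q + 1 := by
  set m := q - 1 with hm
  have hm0 : m ≠ 0 := by omega
  have hn0 : n ≠ 0 := by rw [hn]; exact Nat.mul_ne_zero (by omega) (by omega)
  haveI : NeZero n := ⟨hn0⟩
  haveI : NeZero m := ⟨hm0⟩
  -- nat-level characterizations
  have knat2 : ∀ x : ℕ, (x * ((q + 1) * t) ≡ (q + 1) * c [MOD n]) ↔ (x * t ≡ c [MOD m]) := by
    intro x
    rw [hn]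
    constructor
    · intro H
      refine Nat.ModEq.mul_left_cancel' (show q + 1 ≠ 0 by omega) ?_
      calc (q + 1) * (x * t) = x * ((q + 1) * t) := by ring
        _ ≡ (q + 1) * c [MOD (q + 1) * m] := H
    · intro H
      calc x * ((q + 1) * t) = (q + 1) * (x * t) := by ring
        _ ≡ (q + 1) * c [MOD (q + 1) * m] := Nat.ModEq.mul_left' _ H
  have knat1 : ∀ x : ℕ, (q * x ≡ x [MOD n]) ↔ (q + 1) ∣ x := by
    intro x
    have he : q * x - x = m * x := by
      have h' : m * x = (q - 1) * x := by rw [hm]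
      rw [h', Nat.sub_mul, one_mul]
    constructor
    · intro H
      have hd : n ∣ q * x - x :=
        (Nat.modEq_iff_dvd' (Nat.le_mul_of_pos_left _ (by omega))).mp H.symm
      rw [he, hn, mul_comm (q + 1) m] at hd
      exact (Nat.mul_dvd_mul_iff_left (Nat.pos_of_ne_zero hm0)).mp hd
    · rintro ⟨j, hj⟩
      refine ((Nat.modEq_iff_dvd' (Nat.le_mul_of_pos_left _ (by omega))).mpr ?_).symm
      rw [he, hj, hn]
      exact ⟨j, by ring⟩
  -- ZMod-level characterizations
  have key2 : ∀ a : ZMod n,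
      (a * (((q + 1) * t : ℕ) : ZMod n) = (((q + 1) * c : ℕ) : ZMod n)) ↔
        a.val * t ≡ c [MOD m] := by
    intro a
    have h1 : a * (((q + 1) * t : ℕ) : ZMod n) = ((a.val * ((q + 1) * t) : ℕ) : ZMod n) := by
      conv_rhs => rw [Nat.cast_mul]
      rw [ZMod.natCast_rightInverse a]
    rw [h1, ZMod.natCast_eq_natCast_iff]
    exact knat2 a.val
  have key1 : ∀ a : ZMod n, ((q : ZMod n) * a = a) ↔ (q + 1) ∣ a.val := by
    intro a
    have h1 : (q : ZMod n) * a = ((q * a.val : ℕ) : ZMod n) := by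
      conv_rhs => rw [Nat.cast_mul]
      rw [ZMod.natCast_rightInverse a]
    have h2 : ((q : ZMod n) * a = a) ↔ ((q * a.val : ℕ) : ZMod n) = ((a.val : ℕ) : ZMod n) := by
      rw [h1, ZMod.natCast_rightInverse a]
    rw [h2, ZMod.natCast_eq_natCast_iff]
    exact knat1 a.val
  -- the residue r
  set u : (ZMod m)ˣ := ZMod.unitOfCoprime t ht with hu
  set r : ℕ := ((c : ZMod m) * ((u⁻¹ : (ZMod m)ˣ) : ZMod m)).val with hr
  have hr_lt : r < m := ZMod.val_lt _
  have hcoe : ((t : ℕ) : ZMod m) = (u : ZMod m) := (ZMod.coe_unitOfCoprime t ht).symm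
  have hru : ((r : ℕ) : ZMod m) = (c : ZMod m) * ((u⁻¹ : (ZMod m)ˣ) : ZMod m) :=
    ZMod.natCast_rightInverse _
  have kmod : ∀ x : ℕ, (x * t ≡ c [MOD m]) ↔ x % m = r := by
    intro x
    constructor
    · intro H
      have h5 : ((x : ℕ) : ZMod m) * (u : ZMod m) = (c : ZMod m) := by
        rw [← hcoe, ← Nat.cast_mul]
        exact (ZMod.natCast_eq_natCast_iff _ _ _).mpr H
      have h3 : ((x : ℕ) : ZMod m) = ((r : ℕ) : ZMod m) := by
        rw [hru]; exact (Units.eq_mul_inv_iff_mul_eq u).mpr h5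
      have h4 : x ≡ r [MOD m] := (ZMod.natCast_eq_natCast_iff _ _ _).mp h3
      rw [Nat.ModEq] at h4
      rw [h4, Nat.mod_eq_of_lt hr_lt]
    · intro H
      have h4 : x ≡ r [MOD m] := by rw [Nat.ModEq, H, Nat.mod_eq_of_lt hr_lt]
      have h3 : ((x : ℕ) : ZMod m) = ((r : ℕ) : ZMod m) := (ZMod.natCast_eq_natCast_iff _ _ _).mpr h4
      have h5 : ((x : ℕ) : ZMod m) * (u : ZMod m) = (c : ZMod m) :=
        (Units.eq_mul_inv_iff_mul_eq u).mp (h3.trans hru)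
      rw [← hcoe, ← Nat.cast_mul] at h5
      exact (ZMod.natCast_eq_natCast_iff _ _ _).mp h5
  have hmpos : 0 < m := Nat.pos_of_ne_zero hm0
  have hnm : n = (q + 1) * m := hn
  have hr_lt' := hr_lt
  have key2' : ∀ a : ZMod n,
      (a * (((q + 1) * t : ℕ) : ZMod n) = (((q + 1) * c : ℕ) : ZMod n)) ↔ a.val % m = r :=
    fun a => (key2 a).trans (kmod a.val)
  clear key2
  have key2 := key2'
  have hrc := kmod
  -- A : count of C2
  have hA : Nat.card {a : ZMod n //
      a * (((q + 1) * t : ℕ) : ZMod n) = (((q + 1) * c : ℕ) : ZMod n)} = q + 1 := by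
    have hwlt : ∀ j : Fin (q + 1), r + m * j.val < n := by
      intro j
      have h1 : m * j.val ≤ m * q := Nat.mul_le_mul_left m (by omega)
      have h2 : n = m * q + m := by rw [hnm]; ring
      omega
    refine Nat.card_eq_of_equiv_fin (Equiv.symm ⟨?_, ?_, ?_, ?_⟩) 
    · exact fun j => ⟨((r + m * j.val : ℕ) : ZMod n), by
        rw [key2, ZMod.val_cast_of_lt (hwlt j), Nat.add_mul_mod_self_left,
          Nat.mod_eq_of_lt hr_lt]⟩
    · exact fun a => ⟨a.1.val / m, by
        have hv := ZMod.val_lt a.1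
        exact Nat.div_lt_iff_lt_mul hmpos |>.mpr (lt_of_lt_of_le hv hnm.le)⟩
    · intro j
      apply Fin.ext
      simp only
      rw [ZMod.val_cast_of_lt (hwlt j), Nat.add_mul_div_left _ _ hmpos,
        Nat.div_eq_of_lt hr_lt, zero_add]
    · intro a
      apply Subtype.ext
      simp only
      have hmod : a.1.val % m = r := (key2 a.1).mp a.2
      rw [← hmod, Nat.mod_add_div, ZMod.natCast_rightInverse a.1]
  -- B : equiv to solutions of 2k = r in ZMod m
  have hq2m : q + 1 ≡ 2 [MOD m] := by
    have : m ∣ (q + 1) - 2 := ⟨1, by omega⟩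
    exact ((Nat.modEq_iff_dvd' (by omega)).mpr this).symm
  have hB : Nat.card {a : ZMod n // ((q : ZMod n) * a = a) ∧
      a * (((q + 1) * t : ℕ) : ZMod n) = (((q + 1) * c : ℕ) : ZMod n)}
      = Nat.card {k : ZMod m // 2 * k = ((r : ℕ) : ZMod m)} := by
    refine Nat.card_congr ⟨?_, ?_, ?_, ?_⟩
    · refine fun a => ⟨((a.1.val / (q + 1) : ℕ) : ZMod m), ?_⟩
      obtain ⟨hd, hC2⟩ := a.2
      have hdvd : (q + 1) ∣ a.1.val := (key1 a.1).mp hd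
      have hmod : a.1.val % m = r := (key2 a.1).mp hC2
      have h1 : (q + 1) * (a.1.val / (q + 1)) ≡ r [MOD m] := by
        rw [Nat.mul_div_cancel' hdvd, Nat.ModEq, hmod, Nat.mod_eq_of_lt hr_lt]
      have h2 : 2 * (a.1.val / (q + 1)) ≡ r [MOD m] :=
        (hq2m.symm.mul_right _).trans h1
      have := (ZMod.natCast_eq_natCast_iff _ _ _).mpr h2
      push_cast at this
      rw [← this]
    · refine fun k => ⟨(((q + 1) * k.1.val : ℕ) : ZMod n), ?_, ?_⟩
      · rw [key1, ZMod.val_cast_of_lt]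
        · exact ⟨k.1.val, rfl⟩
        · rw [hnm]; exact mul_lt_mul_of_pos_left (ZMod.val_lt k.1) (by omega : (0:ℕ) < q + 1)
      · rw [key2, ZMod.val_cast_of_lt]
        · have hk := k.2
          have h0 : ((2 * k.1.val : ℕ) : ZMod m) = ((r : ℕ) : ZMod m) := by
            push_cast
            rw [ZMod.natCast_rightInverse k.1]
            exact hk
          have h1 : 2 * k.1.val ≡ r [MOD m] := (ZMod.natCast_eq_natCast_iff _ _ _).mp h0
          have h2 : (q + 1) * k.1.val ≡ r [MOD m] := (hq2m.mul_right _).trans h1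
          rw [Nat.ModEq, Nat.mod_eq_of_lt hr_lt] at h2
          exact h2
        · rw [hnm]; exact mul_lt_mul_of_pos_left (ZMod.val_lt k.1) (by omega : (0:ℕ) < q + 1)
    · intro a
      apply Subtype.ext
      simp only
      obtain ⟨hd, hC2⟩ := a.2
      have hdvd : (q + 1) ∣ a.1.val := (key1 a.1).mp hd
      have hlt : a.1.val / (q + 1) < m := by
        have hv := ZMod.val_lt a.1
        exact Nat.div_lt_iff_lt_mul (by omega : 0 < q + 1) |>.mpr
          (lt_of_lt_of_le hv (hnm.trans (mul_comm _ _)).le)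
      rw [ZMod.val_cast_of_lt hlt, Nat.mul_div_cancel' hdvd, ZMod.natCast_rightInverse a.1]
    · intro k
      apply Subtype.ext
      simp only
      have hlt : (q + 1) * k.1.val < n := by
        rw [hnm]; exact mul_lt_mul_of_pos_left (ZMod.val_lt k.1) (by omega : (0:ℕ) < q + 1)
      rw [ZMod.val_cast_of_lt hlt, Nat.mul_div_cancel_left _ (by omega : 0 < q + 1),
        ZMod.natCast_rightInverse k.1]
  -- split the C2 count
  have hsplit :
      Nat.card {a : ZMod n // a * (((q + 1) * t : ℕ) : ZMod n) = (((q + 1) * c : ℕ) : ZMod n)}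
        = Nat.card {a : ZMod n // ((q : ZMod n) * a = a) ∧
            a * (((q + 1) * t : ℕ) : ZMod n) = (((q + 1) * c : ℕ) : ZMod n)}
          + Nat.card {a : ZMod n // ¬((q : ZMod n) * a = a) ∧
            a * (((q + 1) * t : ℕ) : ZMod n) = (((q + 1) * c : ℕ) : ZMod n)} := by
    rw [Nat.card_congr (Equiv.sumCompl
      (fun x : {a : ZMod n // a * (((q + 1) * t : ℕ) : ZMod n) = (((q + 1) * c : ℕ) : ZMod n)} =>
        (q : ZMod n) * x.1 = x.1)).symm, Nat.card_sum]
    congr 1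
    · exact Nat.card_congr ((Equiv.subtypeSubtypeEquivSubtypeInter
        (fun a : ZMod n => a * (((q + 1) * t : ℕ) : ZMod n) = (((q + 1) * c : ℕ) : ZMod n))
        (fun a : ZMod n => (q : ZMod n) * a = a)).trans
        (Equiv.subtypeEquivRight fun a => and_comm))
    · exact Nat.card_congr ((Equiv.subtypeSubtypeEquivSubtypeInter
        (fun a : ZMod n => a * (((q + 1) * t : ℕ) : ZMod n) = (((q + 1) * c : ℕ) : ZMod n))
        (fun a : ZMod n => ¬((q : ZMod n) * a = a))).trans
        (Equiv.subtypeEquivRight fun a => and_comm))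
  by_cases hqe : Even q
  · -- q even, m odd : unique solution
    have hmodd : Odd m := Nat.Even.sub_odd (by omega) hqe odd_one
    have h2m : Nat.Coprime 2 m := (Nat.prime_two.coprime_iff_not_dvd).mpr (by
      intro h2
      rw [Nat.odd_iff] at hmodd
      omega)
    set u2 : (ZMod m)ˣ := ZMod.unitOfCoprime 2 h2m with hu2def
    have hu2c : ((u2 : (ZMod m)ˣ) : ZMod m) = 2 := by
      rw [hu2def, ZMod.coe_unitOfCoprime]
      norm_cast
    have huniq : ∀ k : ZMod m, (2 * k = ((r : ℕ) : ZMod m)) ↔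
        k = ((u2⁻¹ : (ZMod m)ˣ) : ZMod m) * ((r : ℕ) : ZMod m) := by
      intro k
      constructor
      · intro hk
        exact (Units.eq_inv_mul_iff_mul_eq u2).mpr (by rw [hu2c]; exact hk)
      · rintro rfl
        calc (2 : ZMod m) * (((u2⁻¹ : (ZMod m)ˣ) : ZMod m) * ((r : ℕ) : ZMod m))
            = (u2 : ZMod m) * (((u2⁻¹ : (ZMod m)ˣ) : ZMod m) * ((r : ℕ) : ZMod m)) := by
              rw [hu2c]
          _ = ((r : ℕ) : ZMod m) := Units.mul_inv_cancel_left u2 _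
    have hT : Nat.card {k : ZMod m // 2 * k = ((r : ℕ) : ZMod m)} = 1 := by
      rw [Nat.card_congr (Equiv.subtypeEquivRight huniq), Nat.card_eq_fintype_card,
        Fintype.card_subtype_eq]
    rw [if_pos hqe]
    omega
  · -- q odd, m even
    have hmeven : Even m := Nat.Odd.sub_odd (Nat.not_even_iff_odd.mp hqe) odd_one
    obtain ⟨m2, hm2⟩ := hmeven
    have hg1 : Nat.gcd t m = 1 := ht
    have hrt : r * t ≡ c [MOD m] := (hrc r).mpr (Nat.mod_eq_of_lt hr_lt)
    have htodd : ¬ 2 ∣ t := by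
      intro h2t
      have h2g : 2 ∣ Nat.gcd t m := Nat.dvd_gcd h2t ⟨m2, by omega⟩
      omega
    have hparity : Even c ↔ Even r := by
      have h2 : r * t % 2 = c % 2 := Nat.ModEq.of_dvd ⟨m2, by omega⟩ hrt
      have hkey : Even (r * t) ↔ Even c := by
        rw [Nat.even_iff, Nat.even_iff, h2]
      rw [← hkey, Nat.even_mul, Nat.even_iff, Nat.even_iff]
      omega
    rw [if_neg hqe]
    by_cases hce : Even c
    · have hre : Even r := hparity.mp hce
      obtain ⟨r2, hr2⟩ := hre
      have hr2m : r2 < m2 := by omega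
      have hiff : ∀ k : ZMod m, (2 * k = ((r : ℕ) : ZMod m)) ↔
          (k = ((r2 : ℕ) : ZMod m) ∨ k = ((r2 + m2 : ℕ) : ZMod m)) := by
        intro k
        constructor
        · intro hk
          have h0 : ((2 * k.val : ℕ) : ZMod m) = ((r : ℕ) : ZMod m) := by
            push_cast
            rw [ZMod.natCast_rightInverse k]
            exact hk
          have h1 : 2 * k.val ≡ r [MOD m] := (ZMod.natCast_eq_natCast_iff _ _ _).mp h0
          rw [Nat.ModEq, Nat.mod_eq_of_lt hr_lt] at h1
          have hklt : k.val < m := ZMod.val_lt k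
          have hdiv : 2 * k.val / m < 2 :=
            Nat.div_lt_iff_lt_mul (by omega) |>.mpr (by omega)
          have hdm := Nat.div_add_mod (2 * k.val) m
          rcases (by interval_cases h : 2 * k.val / m <;> [exact Or.inl rfl; exact Or.inr rfl] : 2 * k.val / m = 0 ∨ 2 * k.val / m = 1) with h | h
          · left
            rw [h] at hdm
            clear hdiv h
            have hkv : k.val = r2 := by omega
            rw [← hkv]
            exact (ZMod.natCast_rightInverse k).symm
          · right
            rw [h] at hdm
            clear hdiv h
            have hkv : k.val = r2 + m2 := by omega
            rw [← hkv]
            exact (ZMod.natCast_rightInverse k).symm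
        · intro hk
          rcases hk with rfl | rfl
          · have : ((2 * r2 : ℕ) : ZMod m) = ((r : ℕ) : ZMod m) := by
              rw [show 2 * r2 = r by omega]
            rw [← this]
            push_cast
            ring
          · have : ((2 * (r2 + m2) : ℕ) : ZMod m) = ((r : ℕ) : ZMod m) := by
              rw [show 2 * (r2 + m2) = r + m by omega]
              push_cast
              rw [ZMod.natCast_self]
              ring
            rw [← this]
            push_cast
            ring
      have hne : ((r2 : ℕ) : ZMod m) ≠ ((r2 + m2 : ℕ) : ZMod m) := by
        intro hEq
        have hEq2 := (ZMod.natCast_eq_natCast_iff _ _ _).mp hEq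
        rw [Nat.ModEq, Nat.mod_eq_of_lt (by omega), Nat.mod_eq_of_lt (by omega)] at hEq2
        omega
      have hT : Nat.card {k : ZMod m // 2 * k = ((r : ℕ) : ZMod m)} = 2 := by
        rw [Nat.card_congr (Equiv.subtypeEquivRight hiff), Nat.card_eq_fintype_card,
          Fintype.card_subtype]
        rw [show (univ.filter fun k : ZMod m =>
            k = ((r2 : ℕ) : ZMod m) ∨ k = ((r2 + m2 : ℕ) : ZMod m))
            = {((r2 : ℕ) : ZMod m), ((r2 + m2 : ℕ) : ZMod m)} from by ext k; simp]
        exact card_pair hne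
      rw [if_pos hce]
      omega
    · have hro : ¬ Even r := fun h => hce (hparity.mpr h)
      haveI hempty : IsEmpty {k : ZMod m // 2 * k = ((r : ℕ) : ZMod m)} := by
        refine ⟨fun kk => ?_⟩
        obtain ⟨k, hk⟩ := kk
        have h0 : ((2 * k.val : ℕ) : ZMod m) = ((r : ℕ) : ZMod m) := by
          push_cast
          rw [ZMod.natCast_rightInverse k]
          exact hk
        have h1 : 2 * k.val ≡ r [MOD m] := (ZMod.natCast_eq_natCast_iff _ _ _).mp h0
        rw [Nat.ModEq, Nat.mod_eq_of_lt hr_lt] at h1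
        have hklt : k.val < m := ZMod.val_lt k
        have hdiv : 2 * k.val / m < 2 :=
          Nat.div_lt_iff_lt_mul (by omega) |>.mpr (by omega)
        have hdm := Nat.div_add_mod (2 * k.val) m
        rcases (by interval_cases h : 2 * k.val / m <;> [exact Or.inl rfl; exact Or.inr rfl] : 2 * k.val / m = 0 ∨ 2 * k.val / m = 1) with h | h
        · rw [h] at hdm
          clear hdiv h
          exact hro ⟨k.val, by omega⟩
        · rw [h] at hdm
          clear hdiv h
          exact hro ⟨k.val - m2, by omega⟩
      have hT : Nat.card {k : ZMod m // 2 * k = ((r : ℕ) : ZMod m)} = 0 :=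
        Nat.card_of_isEmpty
      rw [if_neg hce]
      omega

lemma genExt {G : Type*} [Group G] {g : G} (hg : ∀ x, x ∈ Subgroup.zpowers g)
    {M : Type*} [Group M] {f f' : G →* M} (hf : f g = f' g) : f = f' := by
  ext x
  obtain ⟨k, rfl⟩ := Subgroup.mem_zpowers_iff.mp (hg x)
  rw [map_zpow, map_zpow, hf]


/-- The number of primitive characters `ν` of `F_{q²}^*` (i.e. `ν ≠ ν^q`) whose
restriction to `F_q^*` is a given character `ω` equals `q - 1` if `q` is odd and
`ω^((q-1)/2)` is trivial, `q + 1` if `q` is odd and `ω^((q-1)/2)` is nontrivial,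
and `q` if `q` is even. -/
theorem count_primitive_characters_with_restriction
    (F L : Type*) [Field F] [Fintype F] [Field L] [Fintype L] [Algebra F L]
    (hL : Fintype.card L = Fintype.card F ^ 2)
    (ω : Fˣ →* ℂˣ) :
    Nat.card {ν : Lˣ →* ℂˣ //
        ν ^ Fintype.card F ≠ ν ∧
        ν.comp (Units.map ((algebraMap F L : F →+* L) : F →* L)) = ω} =
      if Even (Fintype.card F) then Fintype.card F
      else if ω ^ ((Fintype.card F - 1) / 2) = 1 then Fintype.card F - 1
      else Fintype.card F + 1 := by
  set q := Fintype.card F with hqdef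
  have hq2 : 2 ≤ q := Fintype.one_lt_card
  set n := Nat.card Lˣ with hndef
  have hnval : n = q ^ 2 - 1 := by
    rw [hndef, Nat.card_eq_fintype_card, Fintype.card_units, hL]
  have hnfac : n = (q + 1) * (q - 1) := by
    rw [hnval]
    have h1 : q ^ 2 - 1 ^ 2 = (q + 1) * (q - 1) := Nat.sq_sub_sq q 1
    simpa using h1
  have hn0 : n ≠ 0 := by rw [hnfac]; exact Nat.mul_ne_zero (by omega) (by omega)
  haveI : NeZero n := ⟨hn0⟩
  have hm0 : q - 1 ≠ 0 := by omega
  haveI : NeZero (q - 1) := ⟨hm0⟩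
  -- the cyclic group equivalence
  have e : Multiplicative (ZMod n) ≃* Lˣ := by
    rw [hndef]
    exact zmodCyclicMulEquiv inferInstance
  -- generator of Fˣ
  obtain ⟨h, hh⟩ := IsCyclic.exists_generator (α := Fˣ)
  have hordh : orderOf h = q - 1 := by
    rw [orderOf_eq_card_of_forall_mem_zpowers hh, Nat.card_eq_fintype_card, Fintype.card_units]
  set ι : Fˣ →* Lˣ := Units.map ((algebraMap F L : F →+* L) : F →* L) with hι
  have hinj : Function.Injective ι := Units.map_injective (algebraMap F L).injective
  -- primitive root of unity
  have hζ : IsPrimitiveRoot (Complex.exp (2 * Real.pi * Complex.I / n)) n :=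
    Complex.isPrimitiveRoot_exp n hn0
  set ζu : ℂˣ := (hζ.isUnit hn0).unit with hζudef
  have hζuval : ((ζu : ℂˣ) : ℂ) = Complex.exp (2 * Real.pi * Complex.I / n) :=
    (hζ.isUnit hn0).unit_spec
  have hζuprim : IsPrimitiveRoot ζu n := hζ.isUnit_unit hn0
  have hordζ : orderOf ζu = n := hζuprim.eq_orderOf.symm
  -- generator of Lˣ
  set g : Lˣ := e (Multiplicative.ofAdd (1 : ZMod n)) with hgdef
  have hesymm : e.symm g = Multiplicative.ofAdd (1 : ZMod n) := e.symm_apply_apply _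
  have hordg : orderOf g = n := by
    rw [hgdef, MulEquiv.orderOf_eq e, orderOf_ofAdd_eq_addOrderOf, ZMod.addOrderOf_one]
  have hgen : ∀ x : Lˣ, x ∈ Subgroup.zpowers g := by
    intro x
    have hx : g ^ ((e.symm x).toAdd).val = x := by
      rw [hgdef, ← map_pow]
      rw [show (Multiplicative.ofAdd (1 : ZMod n)) ^ ((e.symm x).toAdd).val
          = Multiplicative.ofAdd (((e.symm x).toAdd).val • (1 : ZMod n)) from
          (ofAdd_nsmul _ _).symm]
      rw [show (((e.symm x).toAdd).val • (1 : ZMod n)) = (e.symm x).toAdd by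
        rw [nsmul_eq_mul, mul_one]
        exact ZMod.natCast_rightInverse _]
      simp
    exact Subgroup.mem_zpowers_iff.mpr
      ⟨((((e.symm x).toAdd).val : ℕ) : ℤ), by rw [zpow_natCast, hx]⟩
  -- the character family
  set ψ : ZMod n → (Lˣ →* ℂˣ) := fun a =>
    { toFun := fun x => ζu ^ (a * (e.symm x).toAdd).val
      map_one' := by simp
      map_mul' := fun x y => by
        simp only [map_mul, toAdd_mul, mul_add]
        rw [← pow_add, pow_eq_pow_iff_modEq, hordζ, ZMod.val_add]
        exact Nat.mod_modEq _ _ } with hψdef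
  have hψ_apply : ∀ (a : ZMod n) (x : Lˣ), ψ a x = ζu ^ (a * (e.symm x).toAdd).val :=
    fun a x => rfl
  have hψg : ∀ a : ZMod n, ψ a g = ζu ^ a.val := by
    intro a
    rw [hψ_apply, hesymm]
    simp
  have hψinj : Function.Injective ψ := by
    intro a b hab
    have h1 : ζu ^ a.val = ζu ^ b.val := by
      rw [← hψg a, ← hψg b, hab]
    have h2 : a.val = b.val := hζuprim.pow_inj (ZMod.val_lt a) (ZMod.val_lt b) h1
    calc a = ((a.val : ℕ) : ZMod n) := (ZMod.natCast_rightInverse a).symm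
      _ = ((b.val : ℕ) : ZMod n) := by rw [h2]
      _ = b := ZMod.natCast_rightInverse b
  have hψsurj : Function.Surjective ψ := by
    intro ν
    have hνg : ((ν g : ℂˣ) : ℂ) ^ n = 1 := by
      rw [← Units.val_pow_eq_pow_val, ← map_pow, ← hordg, pow_orderOf_eq_one, map_one,
        Units.val_one]
    obtain ⟨i, hin, hieq⟩ := hζ.eq_pow_of_pow_eq_one hνg
    refine ⟨((i : ℕ) : ZMod n), genExt hgen ?_⟩
    rw [hψg, ZMod.val_cast_of_lt hin]
    apply Units.ext
    rw [Units.val_pow_eq_pow_val, hζuval]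
    exact hieq
  -- the element w and its structure
  set w : ZMod n := (e.symm (ι h)).toAdd with hw
  have hordw : addOrderOf w = q - 1 := by
    rw [hw, ← orderOf_ofAdd_eq_addOrderOf, ofAdd_toAdd, MulEquiv.orderOf_eq e.symm,
      orderOf_injective ι hinj, hordh]
  have hwcast : ((w.val : ℕ) : ZMod n) = w := ZMod.natCast_rightInverse w
  have hgcd : Nat.gcd n w.val = q + 1 := by
    have hord2 : addOrderOf ((w.val : ℕ) : ZMod n) = n / Nat.gcd n w.val :=
      ZMod.addOrderOf_coe w.val hn0
    rw [hwcast, hordw] at hord2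
    have hdvd : Nat.gcd n w.val ∣ n := Nat.gcd_dvd_left _ _
    have h1 : n / (n / Nat.gcd n w.val) = Nat.gcd n w.val := Nat.div_div_self hdvd hn0
    rw [← hord2] at h1
    have hnd : n / (q - 1) = q + 1 := by
      rw [hnfac]
      exact Nat.mul_div_cancel _ (by omega : 0 < q - 1)
    rw [hnd] at h1
    exact h1.symm
  set t : ℕ := w.val / (q + 1) with htdef
  have hwt : w.val = (q + 1) * t := by
    have hdvd : (q + 1) ∣ w.val := hgcd ▸ Nat.gcd_dvd_right n w.val
    exact (Nat.mul_div_cancel' hdvd).symm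
  have htcop : Nat.Coprime t (q - 1) := by
    have h2 : Nat.gcd ((q + 1) * (q - 1)) ((q + 1) * t) = (q + 1) * Nat.gcd (q - 1) t :=
      Nat.gcd_mul_left _ _ _
    rw [← hnfac, ← hwt, hgcd] at h2
    have h3 : 1 = Nat.gcd (q - 1) t :=
      Nat.eq_of_mul_eq_mul_left (show 0 < q + 1 by omega) (by rw [mul_one]; exact h2)
    exact Nat.coprime_comm.mp h3.symm
  -- decomposition of ω h
  set ζm : ℂˣ := ζu ^ (q + 1) with hζmdef
  have hζmprim : IsPrimitiveRoot ζm (q - 1) :=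
    hζuprim.pow (Nat.pos_of_ne_zero hn0) hnfac
  have hωh : ((ω h : ℂˣ) : ℂ) ^ (q - 1) = 1 := by
    rw [← Units.val_pow_eq_pow_val, ← map_pow, ← hordh, pow_orderOf_eq_one, map_one,
      Units.val_one]
  have hζmc : IsPrimitiveRoot ((ζm : ℂˣ) : ℂ) (q - 1) :=
    IsPrimitiveRoot.coe_units_iff.mpr hζmprim
  obtain ⟨c, hcm, hceq⟩ := hζmc.eq_pow_of_pow_eq_one hωh
  have hceq' : ζm ^ c = ω h :=
    Units.ext (by rw [Units.val_pow_eq_pow_val]; exact hceq)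
  -- condition equivalences
  have hE1 : ∀ a : ZMod n, (ψ a ^ q = ψ a) ↔ ((q : ZMod n) * a = a) := by
    intro a
    have e1 : (ψ a ^ q = ψ a) ↔ (ψ a ^ q) g = ψ a g :=
      ⟨fun hx => by rw [hx], fun hx => genExt hgen hx⟩
    have e2 : (ψ a ^ q) g = (ψ a g) ^ q := MonoidHom.pow_apply _ _ _
    rw [e1, e2, hψg, ← pow_mul, pow_eq_pow_iff_modEq, hordζ, ← ZMod.natCast_eq_natCast_iff]
    constructor
    · intro hcast
      rw [Nat.cast_mul, ZMod.natCast_rightInverse a] at hcast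
      rw [mul_comm]
      exact hcast
    · intro hza
      rw [Nat.cast_mul, ZMod.natCast_rightInverse a, mul_comm]
      exact hza
  have hE2 : ∀ a : ZMod n, ((ψ a).comp ι = ω) ↔
      (a * (((q + 1) * t : ℕ) : ZMod n) = (((q + 1) * c : ℕ) : ZMod n)) := by
    intro a
    have e1 : ((ψ a).comp ι = ω) ↔ (ψ a) (ι h) = ω h :=
      ⟨fun hx => by rw [← hx]; rfl, fun hx => genExt hh (by simpa using hx)⟩
    have lhs1 : (ψ a) (ι h) = ζu ^ ((a * w).val) := by rw [hψ_apply, ← hw]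
    have rhs1 : ω h = ζu ^ ((q + 1) * c) := by rw [← hceq', hζmdef, ← pow_mul]
    rw [e1, lhs1, rhs1, pow_eq_pow_iff_modEq, hordζ, ← ZMod.natCast_eq_natCast_iff,
      ZMod.natCast_rightInverse (a * w),
      show w = (((q + 1) * t : ℕ) : ZMod n) from hwcast.symm.trans (by rw [hwt])]
  -- transfer to the ZMod counting problem
  have hcard : Nat.card {ν : Lˣ →* ℂˣ // ν ^ q ≠ ν ∧ ν.comp ι = ω}
      = Nat.card {a : ZMod n // ¬((q : ZMod n) * a = a) ∧
          a * (((q + 1) * t : ℕ) : ZMod n) = (((q + 1) * c : ℕ) : ZMod n)} := by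
    refine Nat.card_congr (Equiv.symm ?_)
    refine Equiv.subtypeEquiv (Equiv.ofBijective ψ ⟨hψinj, hψsurj⟩) ?_
    intro a
    exact and_congr (not_congr (hE1 a)).symm (hE2 a).symm
  rw [hcard, countZMod q n t c hq2 hnfac htcop hcm]
  by_cases hqe : Even q
  · rw [if_pos hqe, if_pos hqe]
  · rw [if_neg hqe, if_neg hqe]
    have hiff : (ω ^ ((q - 1) / 2) = 1) ↔ Even c := by
      have e1 : (ω ^ ((q - 1) / 2) = 1) ↔ (ω ^ ((q - 1) / 2)) h = 1 :=
        ⟨fun hx => by rw [hx]; rfl, fun hx => genExt hh (by simpa using hx)⟩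
      have e2 : (ω ^ ((q - 1) / 2)) h = (ω h) ^ ((q - 1) / 2) := MonoidHom.pow_apply _ _ _
      rw [e1, e2, ← hceq', ← pow_mul, hζmprim.pow_eq_one_iff_dvd]
      obtain ⟨m2, hm2⟩ : Even (q - 1) :=
        Nat.Odd.sub_odd (Nat.not_even_iff_odd.mp hqe) odd_one
      have hqodd : q % 2 = 1 := Nat.not_even_iff.mp hqe
      have hm2pos : 0 < m2 := by omega
      have hq12 : (q - 1) / 2 = m2 := by omega
      rw [hq12]
      constructor
      · intro hdvd
        have h2 : 2 * m2 ∣ c * m2 := by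
          rw [show 2 * m2 = m2 + m2 by ring, ← hm2]
          exact hdvd
        have h3 : 2 ∣ c := (Nat.mul_dvd_mul_iff_right hm2pos).mp h2
        exact (Nat.even_iff).mpr (by omega)
      · rintro ⟨c2, hc2⟩
        exact ⟨c2, by rw [hc2, hm2]; ring⟩
    exact if_congr hiff.symm rfl rfl
end

section
/- Let F be a p-adic field with integer ring O, maximal ideal p = ϖO, residue field size q, and K' = [[1+p, O],[p, 1+p]] ∩ GL_2(O). For n ≥ 0, the double coset K'·diag(ϖ^n, 1)·K' equals the disjoint union over b ∈ O/p^n of the left cosets [[ϖ^n, b],[0, 1]]·K'. -/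
open Matrix

/-- The pro-`p` unipotent radical `K' = [[1+p, O],[p, 1+p]]` of the Iwahori subgroup
of `GL₂(ℚ_p)`, realized as a set of matrices. -/
def Kprime (p : ℕ) [Fact p.Prime] : Set (Matrix (Fin 2) (Fin 2) ℚ_[p]) :=
  {g | ‖g 0 0 - 1‖ < 1 ∧ ‖g 0 1‖ ≤ 1 ∧ ‖g 1 0‖ < 1 ∧ ‖g 1 1 - 1‖ < 1}

section Helpers

variable {p : ℕ} [Fact p.Prime]

lemma norm_eq_one_of {a : ℚ_[p]} (h : ‖a - 1‖ < 1) : ‖a‖ = 1 := by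
  have : a = 1 + (a - 1) := by ring
  rw [this, Padic.add_eq_max_of_ne (by simp; intro h'; rw [h'] at h; simp at h)]
  simp [max_eq_left (le_of_lt (by simpa using h))]

lemma mul_norm_le_one {a b : ℚ_[p]} (ha : ‖a‖ ≤ 1) (hb : ‖b‖ ≤ 1) : ‖a * b‖ ≤ 1 := by
  rw [norm_mul]; exact mul_le_one₀ ha (norm_nonneg _) hb

lemma mul_norm_lt_one_left {a b : ℚ_[p]} (ha : ‖a‖ < 1) (hb : ‖b‖ ≤ 1) : ‖a * b‖ < 1 := by
  rw [norm_mul]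
  calc ‖a‖ * ‖b‖ ≤ ‖a‖ * 1 := by
        exact mul_le_mul_of_nonneg_left hb (norm_nonneg _)
    _ < 1 := by simpa using ha

lemma mul_norm_lt_one_right {a b : ℚ_[p]} (ha : ‖a‖ ≤ 1) (hb : ‖b‖ < 1) : ‖a * b‖ < 1 := by
  rw [mul_comm]; exact mul_norm_lt_one_left hb ha

lemma add_norm_lt_one {a b : ℚ_[p]} (ha : ‖a‖ < 1) (hb : ‖b‖ < 1) : ‖a + b‖ < 1 :=
  lt_of_le_of_lt (Padic.nonarchimedean a b) (max_lt ha hb)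

lemma add_norm_le_one {a b : ℚ_[p]} (ha : ‖a‖ ≤ 1) (hb : ‖b‖ ≤ 1) : ‖a + b‖ ≤ 1 :=
  le_trans (Padic.nonarchimedean a b) (max_le ha hb)

lemma Kprime_mul {g h : Matrix (Fin 2) (Fin 2) ℚ_[p]} (hg : g ∈ Kprime p)
    (hh : h ∈ Kprime p) : g * h ∈ Kprime p := by
  obtain ⟨hg1, hg2, hg3, hg4⟩ := hg
  obtain ⟨hh1, hh2, hh3, hh4⟩ := hh
  have ga : ‖g 0 0‖ = 1 := norm_eq_one_of hg1
  have gd : ‖g 1 1‖ = 1 := norm_eq_one_of hg4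
  have ha : ‖h 0 0‖ = 1 := norm_eq_one_of hh1
  have hd : ‖h 1 1‖ = 1 := norm_eq_one_of hh4
  refine ⟨?_, ?_, ?_, ?_⟩ <;> simp only [Matrix.mul_apply, Fin.sum_univ_two]
  · have : g 0 0 * h 0 0 + g 0 1 * h 1 0 - 1
        = (g 0 0 - 1) * h 0 0 + ((h 0 0 - 1) + g 0 1 * h 1 0) := by ring
    rw [this]
    exact add_norm_lt_one (mul_norm_lt_one_left hg1 ha.le)
      (add_norm_lt_one hh1 (mul_norm_lt_one_right hg2 hh3))
  · exact add_norm_le_one (mul_norm_le_one ga.le hh2) (mul_norm_le_one hg2 hd.le)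
  · exact add_norm_lt_one (mul_norm_lt_one_left hg3 ha.le)
      (mul_norm_lt_one_right gd.le hh3)
  · have : g 1 0 * h 0 1 + g 1 1 * h 1 1 - 1
        = g 1 0 * h 0 1 + ((g 1 1 - 1) * h 1 1 + (h 1 1 - 1)) := by ring
    rw [this]
    exact add_norm_lt_one (mul_norm_lt_one_left hg3 hh2)
      (add_norm_lt_one (mul_norm_lt_one_left hg4 hd.le) hh4)

lemma one_mem_Kprime : (1 : Matrix (Fin 2) (Fin 2) ℚ_[p]) ∈ Kprime p := by
  refine ⟨?_, ?_, ?_, ?_⟩ <;> simp [Matrix.one_apply]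

lemma norm_p_pow' (n : ℕ) : ‖(p : ℚ_[p]) ^ n‖ = (p : ℝ) ^ (-(n : ℤ)) := by
  exact_mod_cast Padic.norm_p_pow n

lemma p_pow_ne_zero (n : ℕ) : ((p : ℚ_[p]) ^ n) ≠ 0 := by
  have : (p : ℚ_[p]) ≠ 0 := Nat.cast_ne_zero.2 (Fact.out : p.Prime).ne_zero
  exact pow_ne_zero _ this

lemma p_pow_real_pos (n : ℕ) : (0:ℝ) < (p : ℝ) ^ (-(n : ℤ)) :=
  zpow_pos (by exact_mod_cast (Fact.out : p.Prime).pos) _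

lemma coset_subset (n : ℕ) (b₁ b₂ : ℤ_[p]) (h : ‖b₁ - b₂‖ ≤ (p : ℝ) ^ (-(n : ℤ))) :
    {x | ∃ k ∈ Kprime p, x = !![(p : ℚ_[p]) ^ n, (b₁ : ℚ_[p]); 0, 1] * k} ⊆
    {x | ∃ k ∈ Kprime p, x = !![(p : ℚ_[p]) ^ n, (b₂ : ℚ_[p]); 0, 1] * k} := by
  rintro x ⟨k, hk, rfl⟩
  set t : ℚ_[p] := ((b₁ : ℚ_[p]) - (b₂ : ℚ_[p])) / (p : ℚ_[p]) ^ n with ht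
  have hU : !![(1 : ℚ_[p]), t; 0, 1] ∈ Kprime p := by
    refine ⟨by simp, ?_, by simp, by simp⟩
    have : ‖t‖ = ‖(b₁ - b₂ : ℤ_[p])‖ / (p : ℝ) ^ (-(n : ℤ)) := by
      rw [ht, norm_div, norm_p_pow', PadicInt.norm_def]; push_cast; ring_nf
    rw [show (!![(1 : ℚ_[p]), t; 0, 1] : Matrix (Fin 2) (Fin 2) ℚ_[p]) 0 1 = t from rfl, this]
    rw [div_le_one (p_pow_real_pos n)]
    exact h
  refine ⟨!![(1 : ℚ_[p]), t; 0, 1] * k, Kprime_mul hU hk, ?_⟩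
  rw [← Matrix.mul_assoc]
  congr 1
  have hpt : (p : ℚ_[p]) ^ n * t = (b₁ : ℚ_[p]) - (b₂ : ℚ_[p]) := by
    rw [ht, mul_div_cancel₀ _ (p_pow_ne_zero n)]
  rw [Matrix.mul_fin_two]
  simp [hpt, sub_add_cancel]

end Helpers

/-- For `n ≥ 0`, the double coset `K'·diag(p^n, 1)·K'` is the disjoint union over
`b ∈ O/p^n` of the left cosets `[[p^n, b],[0,1]]·K'`: the double coset equals the
union over `b ∈ ℤ_p`, and two such cosets agree iff `b₁ ≡ b₂ (mod p^n)`. -/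
theorem double_coset_decomposition (p : ℕ) [Fact p.Prime] (n : ℕ) :
    (∀ x : Matrix (Fin 2) (Fin 2) ℚ_[p],
      (∃ k₁ ∈ Kprime p, ∃ k₂ ∈ Kprime p,
          x = k₁ * !![(p : ℚ_[p]) ^ n, 0; 0, 1] * k₂) ↔
        ∃ b : ℤ_[p], ∃ k ∈ Kprime p,
          x = !![(p : ℚ_[p]) ^ n, (b : ℚ_[p]); 0, 1] * k) ∧
    ∀ b₁ b₂ : ℤ_[p],
      ({x | ∃ k ∈ Kprime p, x = !![(p : ℚ_[p]) ^ n, (b₁ : ℚ_[p]); 0, 1] * k} =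
        {x | ∃ k ∈ Kprime p, x = !![(p : ℚ_[p]) ^ n, (b₂ : ℚ_[p]); 0, 1] * k}) ↔
        ‖b₁ - b₂‖ ≤ (p : ℝ) ^ (-(n : ℤ)) := by
  constructor
  · intro x
    constructor
    · rintro ⟨k₁, hk₁, k₂, hk₂, rfl⟩
      obtain ⟨h1, h2, h3, h4⟩ := hk₁
      set a := k₁ 0 0; set b := k₁ 0 1; set c := k₁ 1 0; set d := k₁ 1 1
      have hd1 : ‖d‖ = 1 := norm_eq_one_of h4
      have hdne : d ≠ 0 := by intro h; rw [h] at hd1; simp at hd1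
      set β : ℚ_[p] := b * d⁻¹ with hβdef
      have hβ : ‖β‖ ≤ 1 := by
        rw [hβdef, norm_mul, norm_inv, hd1]; simpa using h2
      refine ⟨⟨β, hβ⟩, !![a - c * β, 0; c * (p : ℚ_[p]) ^ n, d] * k₂,
        Kprime_mul ⟨?_, ?_, ?_, ?_⟩ hk₂, ?_⟩
      · show ‖a - c * β - 1‖ < 1
        have : a - c * β - 1 = (a - 1) + (-c) * β := by ring
        rw [this]
        exact add_norm_lt_one h1 (mul_norm_lt_one_left (by simpa using h3) hβ)
      · show ‖(0 : ℚ_[p])‖ ≤ 1; simp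
      · show ‖c * (p : ℚ_[p]) ^ n‖ < 1
        exact mul_norm_lt_one_left h3 (by rw [norm_p_pow']; exact zpow_le_one_of_nonpos₀ (by exact_mod_cast (Fact.out : p.Prime).one_le) (by simp))
      · show ‖d - 1‖ < 1; exact h4
      · rw [← Matrix.mul_assoc]
        congr 1
        ext i j
        fin_cases i <;> fin_cases j <;>
          simp [Matrix.mul_apply, Fin.sum_univ_two, hβdef]
        · field_simp; ring
        · field_simp; rfl
        · simp [c]
        · rfl
    · rintro ⟨b, k, hk, rfl⟩
      refine ⟨!![(1 : ℚ_[p]), (b : ℚ_[p]); 0, 1], ⟨by simp, by simpa using b.2, by simp, by simp⟩,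
        k, hk, ?_⟩
      congr 1
      rw [Matrix.mul_fin_two]
      norm_num
  · intro b₁ b₂
    constructor
    · intro h
      have hm : !![(p : ℚ_[p]) ^ n, (b₁ : ℚ_[p]); 0, 1] ∈
          {x | ∃ k ∈ Kprime p, x = !![(p : ℚ_[p]) ^ n, (b₂ : ℚ_[p]); 0, 1] * k} := by
        rw [← h]
        exact ⟨1, one_mem_Kprime, by rw [Matrix.mul_one]⟩
      obtain ⟨k, hk, hx⟩ := hm
      have h11 : k 1 1 = 1 := by
        have := congrFun (congrFun hx 1) 1
        simpa [Matrix.mul_apply, Fin.sum_univ_two] using this.symm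
      have h01 : (p : ℚ_[p]) ^ n * k 0 1 = (b₁ : ℚ_[p]) - (b₂ : ℚ_[p]) := by
        have := congrFun (congrFun hx 0) 1
        simp [Matrix.mul_apply, Fin.sum_univ_two, h11] at this
        rw [this]; ring
      have : ‖(b₁ - b₂ : ℤ_[p])‖ = (p : ℝ) ^ (-(n : ℤ)) * ‖k 0 1‖ := by
        rw [PadicInt.norm_def]; push_cast
        rw [← h01, norm_mul, norm_p_pow']
      rw [this]
      calc (p : ℝ) ^ (-(n : ℤ)) * ‖k 0 1‖ ≤ (p : ℝ) ^ (-(n : ℤ)) * 1 :=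
            mul_le_mul_of_nonneg_left hk.2.1 (p_pow_real_pos n).le
        _ = (p : ℝ) ^ (-(n : ℤ)) := mul_one _
    · intro h
      exact Set.Subset.antisymm (coset_subset n b₁ b₂ h)
        (coset_subset n b₂ b₁ (by rwa [← norm_neg, neg_sub]))
end
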